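/- The Jordan–Wigner annihilation operators satisfy the canonical anticommutation relation a(i) * (a(j))ᴴ + (a(j))ᴴ * a(i) = (if i = j then 1 else 0) for all i, j : Fin n, where (·)ᴴ denotes the conjugate transpose and 1 is the identity matrix. -/

import Mathlib

open Matrix

/-- The Jordan–Wigner annihilation operator on `n` qubits: its `(s, t)` entry is
`(-1)^(#{k < i : t k = 1})` if `t i = 1`, `s i = 0` and `s k = t k` for all `k ≠ i`,
and `0` otherwise. -/
noncomputable def jwAnnihilation (n : ℕ) (i : Fin n) :
    Matrix (Fin n → Fin 2) (Fin n → Fin 2) ℂ :=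
  Matrix.of fun s t =>
    if t i = 1 ∧ s i = 0 ∧ ∀ k, k ≠ i → s k = t k then
      (-1 : ℂ) ^ (Finset.univ.filter fun k => k < i ∧ t k = 1).card
    else 0

/-- Number of `1`s strictly below position `i`. -/
def jwCnt (n : ℕ) (i : Fin n) (f : Fin n → Fin 2) : ℕ :=
  (Finset.univ.filter fun k => k < i ∧ f k = 1).card

lemma jwCnt_congr {n : ℕ} {i : Fin n} {f g : Fin n → Fin 2}
    (h : ∀ k, k < i → f k = g k) : jwCnt n i f = jwCnt n i g := by
  unfold jwCnt
  congr 1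
  apply Finset.filter_congr
  intro k _
  by_cases hk : k < i
  · simp [hk, h k hk]
  · simp [hk]

lemma jwCnt_succ {n : ℕ} {i m : Fin n} {f g : Fin n → Fin 2} (hm : m < i)
    (hf : f m = 1) (hg : g m = 0) (h : ∀ k, k ≠ m → k < i → f k = g k) :
    jwCnt n i f = jwCnt n i g + 1 := by
  unfold jwCnt
  have hset : (Finset.univ.filter fun k => k < i ∧ f k = 1)
      = insert m (Finset.univ.filter fun k => k < i ∧ g k = 1) := by
    ext k
    simp only [Finset.mem_filter, Finset.mem_univ, true_and, Finset.mem_insert]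
    constructor
    · rintro ⟨hk, hfk⟩
      by_cases hkm : k = m
      · exact Or.inl hkm
      · exact Or.inr ⟨hk, (h k hkm hk) ▸ hfk⟩
    · rintro (rfl | ⟨hk, hgk⟩)
      · exact ⟨hm, hf⟩
      · refine ⟨hk, ?_⟩
        by_cases hkm : k = m
        · subst hkm; rw [hgk] at hg; exact absurd hg (by decide)
        · rw [h k hkm hk, hgk]
  rw [hset, Finset.card_insert_of_notMem (by simp [hg])]

lemma jw_apply {n : ℕ} (i : Fin n) (s t : Fin n → Fin 2) :
    jwAnnihilation n i s t =
      if t i = 1 ∧ s i = 0 ∧ ∀ k, k ≠ i → s k = t k then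
        (-1 : ℂ) ^ jwCnt n i t
      else 0 := rfl

lemma star_jw {n : ℕ} (i : Fin n) (s t : Fin n → Fin 2) :
    star (jwAnnihilation n i s t) = jwAnnihilation n i s t := by
  rw [jw_apply]
  split <;> simp

lemma jw_sum1 {n : ℕ} (i j : Fin n) (s t : Fin n → Fin 2) :
    (jwAnnihilation n i * (jwAnnihilation n j)ᴴ) s t =
      if s i = 0 ∧ t j = 0 ∧ Function.update s i 1 j = 1 ∧
          (∀ k, k ≠ j → t k = Function.update s i 1 k) then
        (-1 : ℂ) ^ jwCnt n i (Function.update s i 1) *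
          (-1 : ℂ) ^ jwCnt n j (Function.update s i 1)
      else 0 := by
  set u₀ := Function.update s i 1 with hu₀
  rw [mul_apply]
  simp only [conjTranspose_apply, star_jw]
  by_cases hs : s i = 0
  · rw [Finset.sum_eq_single u₀ ?h0 (by simp)]
    case h0 =>
      intro u _ hu
      rw [jw_apply]
      split
      · next h1 =>
        exfalso
        apply hu
        funext k
        by_cases hk : k = i
        · subst hk; rw [h1.1, hu₀, Function.update_self]
        · rw [hu₀, Function.update_of_ne hk, h1.2.2 k hk]
      · rw [zero_mul]
    · rw [jw_apply, jw_apply]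
      have h1 : u₀ i = 1 ∧ s i = 0 ∧ ∀ k, k ≠ i → s k = u₀ k :=
        ⟨by rw [hu₀, Function.update_self], hs,
          fun k hk => by rw [hu₀, Function.update_of_ne hk]⟩
      rw [if_pos h1]
      by_cases h2 : u₀ j = 1 ∧ t j = 0 ∧ ∀ k, k ≠ j → t k = u₀ k
      · rw [if_pos h2, if_pos ⟨hs, h2.2.1, h2.1, h2.2.2⟩]
      · rw [if_neg h2, if_neg (fun h => h2 ⟨h.2.2.1, h.2.1, h.2.2.2⟩), mul_zero]
  · rw [if_neg (fun h => hs h.1)]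
    apply Finset.sum_eq_zero
    intro u _
    rw [jw_apply, if_neg (fun h => hs h.2.1), zero_mul]

lemma jw_sum2 {n : ℕ} (i j : Fin n) (s t : Fin n → Fin 2) :
    ((jwAnnihilation n j)ᴴ * jwAnnihilation n i) s t =
      if s j = 1 ∧ t i = 1 ∧ Function.update s j 0 i = 0 ∧
          (∀ k, k ≠ i → Function.update s j 0 k = t k) then
        (-1 : ℂ) ^ jwCnt n j s * (-1 : ℂ) ^ jwCnt n i t
      else 0 := by
  set u₁ := Function.update s j 0 with hu₁
  rw [mul_apply]
  simp only [conjTranspose_apply, star_jw]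
  by_cases hs : s j = 1
  · rw [Finset.sum_eq_single u₁ ?h0 (by simp)]
    case h0 =>
      intro u _ hu
      rw [jw_apply j u s]
      split
      · next h1 =>
        exfalso
        apply hu
        funext k
        by_cases hk : k = j
        · subst hk; rw [h1.2.1, hu₁, Function.update_self]
        · rw [hu₁, Function.update_of_ne hk, h1.2.2 k hk]
      · rw [zero_mul]
    · rw [jw_apply, jw_apply]
      have h1 : s j = 1 ∧ u₁ j = 0 ∧ ∀ k, k ≠ j → u₁ k = s k :=
        ⟨hs, by rw [hu₁, Function.update_self],
          fun k hk => by rw [hu₁, Function.update_of_ne hk]⟩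
      rw [if_pos h1]
      by_cases h2 : t i = 1 ∧ u₁ i = 0 ∧ ∀ k, k ≠ i → u₁ k = t k
      · rw [if_pos h2, if_pos ⟨hs, h2.1, h2.2.1, h2.2.2⟩]
      · rw [if_neg h2, if_neg (fun h => h2 ⟨h.2.1, h.2.2.1, h.2.2.2⟩), mul_zero]
  · rw [if_neg (fun h => hs h.1)]
    apply Finset.sum_eq_zero
    intro u _
    rw [jw_apply j u s, if_neg (fun h => hs h.1), zero_mul]

/-- The Jordan–Wigner operators satisfy the canonical anticommutation relation
`a i * (a j)ᴴ + (a j)ᴴ * a i = δ_{ij} 1`. -/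
theorem jwAnnihilation_car (n : ℕ) (i j : Fin n) :
    jwAnnihilation n i * (jwAnnihilation n j)ᴴ + (jwAnnihilation n j)ᴴ * jwAnnihilation n i =
      if i = j then 1 else 0 := by
  have two : ∀ x : Fin 2, x = 0 ∨ x = 1 := by decide
  by_cases hij : i = j
  · subst hij
    rw [if_pos rfl]
    ext s t
    rw [Matrix.add_apply, jw_sum1, jw_sum2, one_apply]
    by_cases hst : s = t
    · subst hst
      rw [if_pos rfl]
      rcases two (s i) with h0 | h1
      · rw [if_pos ⟨h0, h0, Function.update_self .., fun k hk =>
            (Function.update_of_ne hk _ _).symm⟩,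
          if_neg (fun h => by rw [h0] at h; exact absurd h.1 (by decide)),
          ← pow_add, add_zero]
        exact Even.neg_one_pow ⟨_, rfl⟩
      · rw [if_neg (fun h => by rw [h1] at h; exact absurd h.1 (by decide)),
          if_pos ⟨h1, h1, Function.update_self .., fun k hk =>
            Function.update_of_ne hk _ _⟩,
          ← pow_add, zero_add]
        exact Even.neg_one_pow ⟨_, rfl⟩
    · rw [if_neg hst]
      rw [if_neg, if_neg, add_zero]
      · rintro ⟨h1, h2, -, h4⟩
        apply hst
        funext k
        by_cases hk : k = i
        · subst hk; rw [h1, h2]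
        · rw [← h4 k hk, Function.update_of_ne hk]
      · rintro ⟨h1, h2, -, h4⟩
        apply hst
        funext k
        by_cases hk : k = i
        · subst hk; rw [h1, h2]
        · rw [h4 k hk, Function.update_of_ne hk]
  · rw [if_neg hij]
    ext s t
    rw [Matrix.add_apply, jw_sum1, jw_sum2, Matrix.zero_apply]
    have hji : j ≠ i := fun h => hij h.symm
    by_cases h2 : s j = 1 ∧ t i = 1 ∧ Function.update s j 0 i = 0 ∧
        (∀ k, k ≠ i → Function.update s j 0 k = t k)
    · obtain ⟨hsj, hti, hsi', hall⟩ := h2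
      rw [Function.update_of_ne hij] at hsi'
      have htj : t j = 0 := by
        rw [← hall j hji, Function.update_self]
      have hoff : ∀ k, k ≠ i → k ≠ j → s k = t k := fun k hki hkj => by
        rw [← hall k hki, Function.update_of_ne hkj]
      have h1 : s i = 0 ∧ t j = 0 ∧ Function.update s i 1 j = 1 ∧
          (∀ k, k ≠ j → t k = Function.update s i 1 k) := by
        refine ⟨hsi', htj, by rw [Function.update_of_ne hji, hsj], fun k hkj => ?_⟩
        by_cases hki : k = i
        · subst hki; rw [Function.update_self, hti]
        · rw [Function.update_of_ne hki, ← hoff k hki hkj]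
      rw [if_pos h1, if_pos ⟨hsj, hti, by rw [Function.update_of_ne hij, hsi'], hall⟩]
      have key : jwCnt n i (Function.update s i 1) + jwCnt n j (Function.update s i 1)
          = jwCnt n j s + jwCnt n i t + 1 := by
        have hui : jwCnt n i (Function.update s i 1) = jwCnt n i s :=
          jwCnt_congr fun k hk => Function.update_of_ne (ne_of_lt hk) _ _
        rcases lt_or_gt_of_ne hij with hlt | hgt
        · have huj : jwCnt n j (Function.update s i 1) = jwCnt n j s + 1 :=
            jwCnt_succ hlt (Function.update_self ..) hsi'
              (fun k hk _ => Function.update_of_ne hk _ _)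
          have hit : jwCnt n i t = jwCnt n i s :=
            jwCnt_congr fun k hk =>
              (hoff k (ne_of_lt hk) (ne_of_lt (lt_trans hk hlt))).symm
          omega
        · have huj : jwCnt n j (Function.update s i 1) = jwCnt n j s :=
            jwCnt_congr fun k hk =>
              Function.update_of_ne (ne_of_lt (lt_trans hk hgt)) _ _
          have hst : jwCnt n i s = jwCnt n i t + 1 :=
            jwCnt_succ hgt hsj htj (fun k hkj hk => hoff k (ne_of_lt hk) hkj)
          omega
      rw [← pow_add, ← pow_add, key, pow_succ]
      ring
    · rw [if_neg h2, if_neg, add_zero]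
      rintro ⟨hsi, htj, huj, hall⟩
      rw [Function.update_of_ne hji] at huj
      apply h2
      refine ⟨huj, by rw [hall i hij, Function.update_self], by
        rw [Function.update_of_ne hij, hsi], fun k hki => ?_⟩
      by_cases hkj : k = j
      · subst hkj; rw [Function.update_self, htj]
      · rw [Function.update_of_ne hkj, hall k hkj, Function.update_of_ne hki]
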